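/- If X is an odd integer with X^2 - 1 = 2Y^2 and X^2 - 9 = 10Z^2 for some integers Y, Z, then X ≡ ±2 (mod 5) is forced, hence if additionally X is a norm from Z[(1+√5)/2] (i.e., X = a^2 + ab - b^2 for some integers a, b) there is no solution. -/
import Mathlib


theorem forced_residue_and_no_norm (X Y Z : ℤ) (hX : Odd X)
    (h1 : X ^ 2 - 1 = 2 * Y ^ 2) (h2 : X ^ 2 - 9 = 10 * Z ^ 2) :
    (X ≡ 2 [ZMOD 5] ∨ X ≡ -2 [ZMOD 5]) ∧
    ¬ ∃ a b : ℤ, a ^ 2 + a * b - b ^ 2 = X := by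
  have h5 : (X : ZMod 5) ^ 2 = 4 := by
    have := congrArg (Int.cast : ℤ → ZMod 5) h2
    push_cast at this
    have h50 : (5 : ZMod 5) = 0 := by decide
    linear_combination this + (2 * (Z : ZMod 5) ^ 2 + 1) * h50
  have key : ∀ x : ZMod 5, x ^ 2 = 4 → x = 2 ∨ x = -2 := by decide
  have hx5 := key _ h5
  constructor
  · rcases hx5 with h | h
    · left
      have : (X : ZMod 5) = ((2 : ℤ) : ZMod 5) := by push_cast; exact h
      exact (ZMod.intCast_eq_intCast_iff X 2 5).mp this
    · right
      have : (X : ZMod 5) = ((-2 : ℤ) : ZMod 5) := by push_cast; exact h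
      exact (ZMod.intCast_eq_intCast_iff X (-2) 5).mp this
  · rintro ⟨a, b, hab⟩
    have := congrArg (Int.cast : ℤ → ZMod 5) hab
    push_cast at this
    have norm5 : ∀ a b : ZMod 5, a ^ 2 + a * b - b ^ 2 ≠ 2 ∧ a ^ 2 + a * b - b ^ 2 ≠ -2 := by
      decide
    rcases hx5 with h | h
    · exact (norm5 a b).1 (this.trans h)
    · exact (norm5 a b).2 (this.trans h)
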